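/- Let a = 2b with b ≥ 1 a positive integer. Then K(a, a, a, a−1, a−1) = (5b² + 3b)/2. -/

import Mathlib

/-- The Kostka number `K(a₁,…,aₘ)` of the two-rowed rectangular shape `(s,s)`,
where `2s = a₁ + ⋯ + aₘ`: the number of semistandard Young tableaux with two rows
of length `s` (entries weakly increasing along rows, strictly increasing down
columns) containing exactly `aᵢ` entries equal to `i`.  A tableau is encoded as
`T : Fin 2 → Fin s → Fin m`, where the value `T r c` encodes the entry `(T r c) + 1`
in row `r`, column `c`.  If the sum of the entries is odd, the Kostka number is `0`. -/
noncomputable def kostka (a : List ℕ) : ℕ :=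
  if a.sum % 2 = 0 then
    Nat.card {T : Fin 2 → Fin (a.sum / 2) → Fin a.length //
      (∀ r, Monotone (T r)) ∧
      (∀ c, T 0 c < T 1 c) ∧
      (∀ i : Fin a.length,
        Nat.card {p : Fin 2 × Fin (a.sum / 2) // T p.1 p.2 = i} = a.get i)}
  else 0



open Finset

section helpers

lemma card_filter_interval {n : ℕ} (l u : ℕ) (hu : u ≤ n) :
    (univ.filter (fun c : Fin n => l ≤ (c : ℕ) ∧ (c : ℕ) < u)).card = u - l := by
  rw [← Nat.card_Ico l u]
  refine Finset.card_bij (fun c _ => (c : ℕ)) ?_ ?_ ?_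
  · intro c hc; simp only [mem_filter] at hc; simp [mem_Ico, hc.2.1, hc.2.2]
  · intro c _ c' _ h; exact Fin.val_injective h
  · intro m hm
    rw [mem_Ico] at hm
    exact ⟨⟨m, lt_of_lt_of_le hm.2 hu⟩, by simp [hm.1, hm.2], rfl⟩

def cnt {n m : ℕ} (f : Fin n → Fin m) (k : ℕ) : ℕ :=
  (univ.filter (fun c => (f c : ℕ) ≤ k)).card

lemma lt_cnt_iff {n m : ℕ} {f : Fin n → Fin m} (hf : Monotone f) (c : Fin n) (k : ℕ) :
    (c : ℕ) < cnt f k ↔ (f c : ℕ) ≤ k := by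
  constructor
  · intro h
    by_contra hk
    push_neg at hk
    have hsub : (univ.filter (fun c' => (f c' : ℕ) ≤ k)) ⊆
        (univ.filter (fun c' : Fin n => 0 ≤ (c' : ℕ) ∧ (c' : ℕ) < (c : ℕ))) := by
      intro c' hc'
      simp only [mem_filter, mem_univ, true_and] at hc' ⊢
      refine ⟨Nat.zero_le _, ?_⟩
      by_contra hcc
      push_neg at hcc
      have : f c ≤ f c' := hf (by exact Fin.le_def.mpr hcc)
      omega
    have := Finset.card_le_card hsub
    rw [card_filter_interval 0 (c : ℕ) (le_of_lt c.isLt)] at this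
    unfold cnt at h
    omega
  · intro h
    have hsub : (univ.filter (fun c' : Fin n => 0 ≤ (c' : ℕ) ∧ (c' : ℕ) < (c : ℕ) + 1)) ⊆
        (univ.filter (fun c' => (f c' : ℕ) ≤ k)) := by
      intro c' hc'
      simp only [mem_filter, mem_univ, true_and] at hc' ⊢
      have : f c' ≤ f c := hf (Fin.le_def.mpr (by omega))
      omega
    have := Finset.card_le_card hsub
    rw [card_filter_interval 0 ((c : ℕ) + 1) c.isLt] at this
    unfold cnt
    omega

lemma mono_ext {n m : ℕ} {f g : Fin n → Fin m} (hf : Monotone f) (hg : Monotone g)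
    (h : ∀ k : ℕ, cnt f k = cnt g k) : f = g := by
  funext c
  have h1 : (f c : ℕ) ≤ (g c : ℕ) := by
    rw [← lt_cnt_iff hf c, h]
    exact (lt_cnt_iff hg c _).mpr le_rfl
  have h2 : (g c : ℕ) ≤ (f c : ℕ) := by
    rw [← lt_cnt_iff hg c, ← h]
    exact (lt_cnt_iff hf c _).mpr le_rfl
  exact Fin.ext (le_antisymm h1 h2)

lemma card_pair_split {n m : ℕ} (T : Fin 2 → Fin n → Fin m) (i : Fin m) :
    Nat.card {p : Fin 2 × Fin n // T p.1 p.2 = i} =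
      (univ.filter (fun c => T 0 c = i)).card + (univ.filter (fun c => T 1 c = i)).card := by
  rw [Nat.card_eq_fintype_card, Fintype.card_subtype]
  rw [Finset.card_filter, Fintype.sum_prod_type, Fin.sum_univ_two]
  rw [Finset.card_filter, Finset.card_filter]

lemma cnt_succ {n m : ℕ} (f : Fin n → Fin m) (k : ℕ) :
    cnt f (k + 1) = cnt f k + (univ.filter (fun c => (f c : ℕ) = k + 1)).card := by
  unfold cnt
  rw [← Finset.card_union_of_disjoint, ← Finset.filter_or]
  · congr 1
    apply Finset.filter_congr
    intro c _
    constructor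
    · intro h; omega
    · intro h; omega
  · rw [Finset.disjoint_filter]
    intro c _ h
    omega

lemma cnt_zero' {n m : ℕ} (f : Fin n → Fin m) :
    cnt f 0 = (univ.filter (fun c => (f c : ℕ) = 0)).card := by
  unfold cnt
  congr 1
  apply Finset.filter_congr
  intro c _
  simp [Nat.le_zero]

lemma cnt_top {n m : ℕ} (f : Fin n → Fin m) (k : ℕ) (hk : m ≤ k + 1) :
    cnt f k = n := by
  unfold cnt
  rw [Finset.filter_true_of_mem, Finset.card_univ, Fintype.card_fin]
  intro c _
  have := (f c).isLt
  omega

lemma cnt_le {n m : ℕ} (f : Fin n → Fin m) (k : ℕ) : cnt f k ≤ n :=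
  le_trans (Finset.card_filter_le _ _) (by simp)

lemma ballot {n m : ℕ} {f g : Fin n → Fin m} (hf : Monotone f) (hg : Monotone g)
    (hfg : ∀ c, f c < g c) (k : ℕ) : cnt g (k + 1) ≤ cnt f k := by
  rcases Nat.eq_zero_or_pos (cnt g (k + 1)) with h | h
  · omega
  · have hlt : cnt g (k + 1) - 1 < n := lt_of_lt_of_le (by omega) (cnt_le g (k + 1))
    have h1 : (g ⟨cnt g (k+1) - 1, hlt⟩ : ℕ) ≤ k + 1 :=
      (lt_cnt_iff hg ⟨cnt g (k+1) - 1, hlt⟩ (k+1)).mp (by simp; omega)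
    have h2 : (f ⟨cnt g (k+1) - 1, hlt⟩ : ℕ) < (g ⟨cnt g (k+1) - 1, hlt⟩ : ℕ) :=
      hfg ⟨cnt g (k+1) - 1, hlt⟩
    have h3 : ((⟨cnt g (k+1) - 1, hlt⟩ : Fin n) : ℕ) < cnt f k :=
      (lt_cnt_iff hf ⟨cnt g (k+1) - 1, hlt⟩ k).mpr (by omega)
    simp at h3
    omega

lemma cnt_eq_interval {n m : ℕ} (f : Fin n → Fin m) (k u : ℕ) (hu : u ≤ n)
    (h : ∀ c : Fin n, (f c : ℕ) ≤ k ↔ (c : ℕ) < u) : cnt f k = u := by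
  unfold cnt
  rw [show (univ.filter (fun c : Fin n => (f c : ℕ) ≤ k)) =
      univ.filter (fun c : Fin n => 0 ≤ (c : ℕ) ∧ (c : ℕ) < u) from
    Finset.filter_congr (fun c _ => by simp [h c])]
  rw [card_filter_interval 0 u hu]
  omega

lemma fiber_eq_interval {n m : ℕ} (f : Fin n → Fin m) (i : Fin m) (l u : ℕ) (hu : u ≤ n)
    (h : ∀ c : Fin n, f c = i ↔ (l ≤ (c : ℕ) ∧ (c : ℕ) < u)) :
    (univ.filter (fun c => f c = i)).card = u - l := by
  rw [show univ.filter (fun c => f c = i) =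
      univ.filter (fun c : Fin n => l ≤ (c : ℕ) ∧ (c : ℕ) < u) from
    Finset.filter_congr (fun c _ => by simp [h c])]
  exact card_filter_interval l u hu

end helpers

section rows

def row0 (b x y : ℕ) : Fin (5*b-1) → Fin 5 := fun c =>
  if (c:ℕ) < 2*b then 0 else if (c:ℕ) < 4*b-x then 1 else if (c:ℕ) < 6*b-x-y then 2 else 3

def row1 (b x y : ℕ) : Fin (5*b-1) → Fin 5 := fun c =>
  if (c:ℕ) < x then 1 else if (c:ℕ) < x+y then 2 else if (c:ℕ) < 3*b then 3 else 4

lemma row0_mono (b x y : ℕ) : Monotone (row0 b x y) := by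
  intro c c' h
  have hcc : (c:ℕ) ≤ (c':ℕ) := h
  unfold row0
  split_ifs <;> first | decide | (exfalso; omega)

lemma row1_mono (b x y : ℕ) : Monotone (row1 b x y) := by
  intro c c' h
  have hcc : (c:ℕ) ≤ (c':ℕ) := h
  unfold row1
  split_ifs <;> first | decide | (exfalso; omega)

lemma col_strict (b x y : ℕ) (h2 : x+y ≤ 3*b) (h3 : 2*x+y ≤ 4*b)
    (c : Fin (5*b-1)) : row0 b x y c < row1 b x y c := by
  have hc := c.isLt
  unfold row0 row1
  split_ifs <;> first | decide | (exfalso; omega)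

variable {b x y : ℕ}

-- cnt values of row0
lemma cnt_row0_0 (hb : 1 ≤ b) : cnt (row0 b x y) 0 = 2*b := by
  apply cnt_eq_interval _ _ _ (by omega)
  intro c
  unfold row0
  simp only [apply_ite (Fin.val), show ((0:Fin 5):ℕ) = 0 from rfl, show ((1:Fin 5):ℕ) = 1 from rfl, show ((2:Fin 5):ℕ) = 2 from rfl, show ((3:Fin 5):ℕ) = 3 from rfl, show ((4:Fin 5):ℕ) = 4 from rfl]
  split_ifs <;> (try norm_num) <;> omega

lemma cnt_row0_1 (hb : 1 ≤ b) (h3 : 2*x+y ≤ 4*b) : cnt (row0 b x y) 1 = 4*b - x := by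
  apply cnt_eq_interval _ _ _ (by omega)
  intro c
  unfold row0
  simp only [apply_ite (Fin.val), show ((0:Fin 5):ℕ) = 0 from rfl, show ((1:Fin 5):ℕ) = 1 from rfl, show ((2:Fin 5):ℕ) = 2 from rfl, show ((3:Fin 5):ℕ) = 3 from rfl, show ((4:Fin 5):ℕ) = 4 from rfl]
  split_ifs <;> (try norm_num) <;> omega

lemma cnt_row0_2 (hb : 1 ≤ b) (h1 : b+1 ≤ x+y) (h3 : 2*x+y ≤ 4*b) (h4 : y ≤ 2*b) : cnt (row0 b x y) 2 = 6*b - x - y := by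
  apply cnt_eq_interval _ _ _ (by omega)
  intro c
  unfold row0
  simp only [apply_ite (Fin.val), show ((0:Fin 5):ℕ) = 0 from rfl, show ((1:Fin 5):ℕ) = 1 from rfl, show ((2:Fin 5):ℕ) = 2 from rfl, show ((3:Fin 5):ℕ) = 3 from rfl, show ((4:Fin 5):ℕ) = 4 from rfl]
  split_ifs <;> (try norm_num) <;> omega

lemma cnt_row0_big (k : ℕ) (hk : 3 ≤ k) : cnt (row0 b x y) k = 5*b - 1 := by
  apply cnt_eq_interval _ _ _ (le_refl _)
  intro c
  have := c.isLt
  unfold row0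
  simp only [apply_ite (Fin.val), show ((0:Fin 5):ℕ) = 0 from rfl, show ((1:Fin 5):ℕ) = 1 from rfl, show ((2:Fin 5):ℕ) = 2 from rfl, show ((3:Fin 5):ℕ) = 3 from rfl, show ((4:Fin 5):ℕ) = 4 from rfl]
  split_ifs <;> (try norm_num) <;> omega

lemma cnt_row1_0 : cnt (row1 b x y) 0 = 0 := by
  apply cnt_eq_interval _ _ _ (by omega)
  intro c
  unfold row1
  simp only [apply_ite (Fin.val), show ((0:Fin 5):ℕ) = 0 from rfl, show ((1:Fin 5):ℕ) = 1 from rfl, show ((2:Fin 5):ℕ) = 2 from rfl, show ((3:Fin 5):ℕ) = 3 from rfl, show ((4:Fin 5):ℕ) = 4 from rfl]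
  split_ifs <;> (try norm_num) <;> omega

lemma cnt_row1_1 (hb : 1 ≤ b) (h3 : 2*x+y ≤ 4*b) : cnt (row1 b x y) 1 = x := by
  apply cnt_eq_interval _ _ _ (by omega)
  intro c
  unfold row1
  simp only [apply_ite (Fin.val), show ((0:Fin 5):ℕ) = 0 from rfl, show ((1:Fin 5):ℕ) = 1 from rfl, show ((2:Fin 5):ℕ) = 2 from rfl, show ((3:Fin 5):ℕ) = 3 from rfl, show ((4:Fin 5):ℕ) = 4 from rfl]
  split_ifs <;> (try norm_num) <;> omega

lemma cnt_row1_2 (hb : 1 ≤ b) (h2 : x+y ≤ 3*b) : cnt (row1 b x y) 2 = x + y := by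
  apply cnt_eq_interval _ _ _ (by omega)
  intro c
  unfold row1
  simp only [apply_ite (Fin.val), show ((0:Fin 5):ℕ) = 0 from rfl, show ((1:Fin 5):ℕ) = 1 from rfl, show ((2:Fin 5):ℕ) = 2 from rfl, show ((3:Fin 5):ℕ) = 3 from rfl, show ((4:Fin 5):ℕ) = 4 from rfl]
  split_ifs <;> (try norm_num) <;> omega

lemma cnt_row1_3 (hb : 1 ≤ b) (h2 : x+y ≤ 3*b) : cnt (row1 b x y) 3 = 3*b := by
  apply cnt_eq_interval _ _ _ (by omega)
  intro c
  unfold row1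
  simp only [apply_ite (Fin.val), show ((0:Fin 5):ℕ) = 0 from rfl, show ((1:Fin 5):ℕ) = 1 from rfl, show ((2:Fin 5):ℕ) = 2 from rfl, show ((3:Fin 5):ℕ) = 3 from rfl, show ((4:Fin 5):ℕ) = 4 from rfl]
  split_ifs <;> (try norm_num) <;> omega

lemma cnt_row1_big (k : ℕ) (hk : 4 ≤ k) : cnt (row1 b x y) k = 5*b - 1 := by
  apply cnt_eq_interval _ _ _ (le_refl _)
  intro c
  have := c.isLt
  unfold row1
  simp only [apply_ite (Fin.val), show ((0:Fin 5):ℕ) = 0 from rfl, show ((1:Fin 5):ℕ) = 1 from rfl, show ((2:Fin 5):ℕ) = 2 from rfl, show ((3:Fin 5):ℕ) = 3 from rfl, show ((4:Fin 5):ℕ) = 4 from rfl]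
  split_ifs <;> (try norm_num) <;> omega

end rows

section tab

variable {b x y : ℕ}

lemma tab_mono : ∀ r : Fin 2, Monotone (![row0 b x y, row1 b x y] r) := by
  intro r
  fin_cases r
  · simpa using row0_mono b x y
  · simpa using row1_mono b x y

lemma tab_col (h2 : x+y ≤ 3*b) (h3 : 2*x+y ≤ 4*b) :
    ∀ c, (![row0 b x y, row1 b x y]) 0 c < (![row0 b x y, row1 b x y]) 1 c := by
  intro c
  simp only [Matrix.cons_val_zero, Matrix.cons_val_one, Matrix.head_cons]
  exact col_strict b x y h2 h3 c

lemma tab_count (hb : 1 ≤ b) (h1 : b+1 ≤ x+y) (h2 : x+y ≤ 3*b) (h3 : 2*x+y ≤ 4*b)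
    (h4 : y ≤ 2*b) :
    ∀ i : Fin 5, Nat.card {p : Fin 2 × Fin (5*b-1) // (![row0 b x y, row1 b x y]) p.1 p.2 = i}
      = [2*b, 2*b, 2*b, 2*b-1, 2*b-1].get i := by
  intro i
  rw [card_pair_split]
  rw [show (![row0 b x y, row1 b x y] 0) = row0 b x y from rfl,
    show (![row0 b x y, row1 b x y] 1) = row1 b x y from rfl]
  fin_cases i
  · rw [fiber_eq_interval (row0 b x y) _ 0 (2*b) (by omega) ?_,
        fiber_eq_interval (row1 b x y) _ 0 0 (by omega) ?_]
    · show 2*b - 0 + (0 - 0) = 2*b; omega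
    · intro c; have := c.isLt; rw [Fin.ext_iff]
      simp only [row0, row1, apply_ite (Fin.val), show ((0:Fin 5):ℕ) = 0 from rfl, show ((1:Fin 5):ℕ) = 1 from rfl, show ((2:Fin 5):ℕ) = 2 from rfl, show ((3:Fin 5):ℕ) = 3 from rfl, show ((4:Fin 5):ℕ) = 4 from rfl]
      split_ifs <;> (try norm_num) <;> omega
    · intro c; have := c.isLt; rw [Fin.ext_iff]
      simp only [row0, row1, apply_ite (Fin.val), show ((0:Fin 5):ℕ) = 0 from rfl, show ((1:Fin 5):ℕ) = 1 from rfl, show ((2:Fin 5):ℕ) = 2 from rfl, show ((3:Fin 5):ℕ) = 3 from rfl, show ((4:Fin 5):ℕ) = 4 from rfl]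
      split_ifs <;> (try norm_num) <;> omega
  · rw [fiber_eq_interval (row0 b x y) _ (2*b) (4*b - x) (by omega) ?_,
        fiber_eq_interval (row1 b x y) _ 0 x (by omega) ?_]
    · show 4*b - x - 2*b + (x - 0) = 2*b; omega
    · intro c; have := c.isLt; rw [Fin.ext_iff]
      simp only [row0, row1, apply_ite (Fin.val), show ((0:Fin 5):ℕ) = 0 from rfl, show ((1:Fin 5):ℕ) = 1 from rfl, show ((2:Fin 5):ℕ) = 2 from rfl, show ((3:Fin 5):ℕ) = 3 from rfl, show ((4:Fin 5):ℕ) = 4 from rfl]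
      split_ifs <;> (try norm_num) <;> omega
    · intro c; have := c.isLt; rw [Fin.ext_iff]
      simp only [row0, row1, apply_ite (Fin.val), show ((0:Fin 5):ℕ) = 0 from rfl, show ((1:Fin 5):ℕ) = 1 from rfl, show ((2:Fin 5):ℕ) = 2 from rfl, show ((3:Fin 5):ℕ) = 3 from rfl, show ((4:Fin 5):ℕ) = 4 from rfl]
      split_ifs <;> (try norm_num) <;> omega
  · rw [fiber_eq_interval (row0 b x y) _ (4*b - x) (6*b - x - y) (by omega) ?_,
        fiber_eq_interval (row1 b x y) _ x (x + y) (by omega) ?_]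
    · show 6*b - x - y - (4*b - x) + (x + y - x) = 2*b; omega
    · intro c; have := c.isLt; rw [Fin.ext_iff]
      simp only [row0, row1, apply_ite (Fin.val), show ((0:Fin 5):ℕ) = 0 from rfl, show ((1:Fin 5):ℕ) = 1 from rfl, show ((2:Fin 5):ℕ) = 2 from rfl, show ((3:Fin 5):ℕ) = 3 from rfl, show ((4:Fin 5):ℕ) = 4 from rfl]
      split_ifs <;> (try norm_num) <;> omega
    · intro c; have := c.isLt; rw [Fin.ext_iff]
      simp only [row0, row1, apply_ite (Fin.val), show ((0:Fin 5):ℕ) = 0 from rfl, show ((1:Fin 5):ℕ) = 1 from rfl, show ((2:Fin 5):ℕ) = 2 from rfl, show ((3:Fin 5):ℕ) = 3 from rfl, show ((4:Fin 5):ℕ) = 4 from rfl]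
      split_ifs <;> (try norm_num) <;> omega
  · rw [fiber_eq_interval (row0 b x y) _ (6*b - x - y) (5*b - 1) (by omega) ?_,
        fiber_eq_interval (row1 b x y) _ (x + y) (3*b) (by omega) ?_]
    · show 5*b - 1 - (6*b - x - y) + (3*b - (x + y)) = 2*b - 1; omega
    · intro c; have := c.isLt; rw [Fin.ext_iff]
      simp only [row0, row1, apply_ite (Fin.val), show ((0:Fin 5):ℕ) = 0 from rfl, show ((1:Fin 5):ℕ) = 1 from rfl, show ((2:Fin 5):ℕ) = 2 from rfl, show ((3:Fin 5):ℕ) = 3 from rfl, show ((4:Fin 5):ℕ) = 4 from rfl]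
      split_ifs <;> (try norm_num) <;> omega
    · intro c; have := c.isLt; rw [Fin.ext_iff]
      simp only [row0, row1, apply_ite (Fin.val), show ((0:Fin 5):ℕ) = 0 from rfl, show ((1:Fin 5):ℕ) = 1 from rfl, show ((2:Fin 5):ℕ) = 2 from rfl, show ((3:Fin 5):ℕ) = 3 from rfl, show ((4:Fin 5):ℕ) = 4 from rfl]
      split_ifs <;> (try norm_num) <;> omega
  · rw [fiber_eq_interval (row0 b x y) _ 0 0 (by omega) ?_,
        fiber_eq_interval (row1 b x y) _ (3*b) (5*b - 1) (by omega) ?_]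
    · show 0 - 0 + (5*b - 1 - 3*b) = 2*b - 1; omega
    · intro c; have := c.isLt; rw [Fin.ext_iff]
      simp only [row0, row1, apply_ite (Fin.val), show ((0:Fin 5):ℕ) = 0 from rfl, show ((1:Fin 5):ℕ) = 1 from rfl, show ((2:Fin 5):ℕ) = 2 from rfl, show ((3:Fin 5):ℕ) = 3 from rfl, show ((4:Fin 5):ℕ) = 4 from rfl]
      split_ifs <;> (try norm_num) <;> omega
    · intro c; have := c.isLt; rw [Fin.ext_iff]
      simp only [row0, row1, apply_ite (Fin.val), show ((0:Fin 5):ℕ) = 0 from rfl, show ((1:Fin 5):ℕ) = 1 from rfl, show ((2:Fin 5):ℕ) = 2 from rfl, show ((3:Fin 5):ℕ) = 3 from rfl, show ((4:Fin 5):ℕ) = 4 from rfl]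
      split_ifs <;> (try norm_num) <;> omega

end tab

theorem main_card (b : ℕ) (hb : 1 ≤ b) :
    Nat.card {T : Fin 2 → Fin (5*b-1) → Fin 5 //
      (∀ r, Monotone (T r)) ∧ (∀ c, T 0 c < T 1 c) ∧
      (∀ i : Fin 5, Nat.card {p : Fin 2 × Fin (5*b-1) // T p.1 p.2 = i} =
        [2*b, 2*b, 2*b, 2*b-1, 2*b-1].get i)} = (5*b^2 + 3*b)/2 := by
  classical
  set P : ℕ × ℕ → Prop :=
    fun q => b+1 ≤ q.1+q.2 ∧ q.1+q.2 ≤ 3*b ∧ 2*q.1+q.2 ≤ 4*b ∧ q.2 ≤ 2*b with hP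
  let f : {q : ℕ × ℕ // P q} → {T : Fin 2 → Fin (5*b-1) → Fin 5 //
      (∀ r, Monotone (T r)) ∧ (∀ c, T 0 c < T 1 c) ∧
      (∀ i : Fin 5, Nat.card {p : Fin 2 × Fin (5*b-1) // T p.1 p.2 = i} =
        [2*b, 2*b, 2*b, 2*b-1, 2*b-1].get i)} :=
    fun q => ⟨![row0 b q.1.1 q.1.2, row1 b q.1.1 q.1.2],
      tab_mono, tab_col q.2.2.1 q.2.2.2.1,
      tab_count hb q.2.1 q.2.2.1 q.2.2.2.1 q.2.2.2.2⟩
  have hinj : Function.Injective f := by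
    rintro ⟨⟨x, y⟩, hq⟩ ⟨⟨x', y'⟩, hq'⟩ h
    rw [Subtype.ext_iff] at h
    have h1fun : row1 b x y = row1 b x' y' := by
      have := congrFun h 1
      simpa [f] using this
    have e1 : cnt (row1 b x y) 1 = cnt (row1 b x' y') 1 := by rw [h1fun]
    have e2 : cnt (row1 b x y) 2 = cnt (row1 b x' y') 2 := by rw [h1fun]
    rw [cnt_row1_1 hb hq.2.2.1, cnt_row1_1 hb hq'.2.2.1] at e1
    rw [cnt_row1_2 hb hq.2.1, cnt_row1_2 hb hq'.2.1] at e2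
    apply Subtype.ext
    simp only at e1 e2 ⊢
    simp only [Prod.mk.injEq]
    omega
  have hsurj : Function.Surjective f := by
    rintro ⟨T, hm, hcol, hcnt⟩
    have hAgen : ∀ i : Fin 5,
        (univ.filter (fun c => ((T 0 c : ℕ)) = (i:ℕ))).card +
        (univ.filter (fun c => ((T 1 c : ℕ)) = (i:ℕ))).card =
        [2*b, 2*b, 2*b, 2*b-1, 2*b-1].get i := by
      intro i
      have h := hcnt i
      rw [card_pair_split] at h
      rw [show (univ.filter (fun c => ((T 0 c : ℕ)) = (i:ℕ))) =
            univ.filter (fun c => T 0 c = i) from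
          Finset.filter_congr (fun c _ => by simp [Fin.ext_iff]),
          show (univ.filter (fun c => ((T 1 c : ℕ)) = (i:ℕ))) =
            univ.filter (fun c => T 1 c = i) from
          Finset.filter_congr (fun c _ => by simp [Fin.ext_iff])]
      exact h
    have g0 : (univ.filter (fun c => ((T 0 c : ℕ)) = 0)).card +
        (univ.filter (fun c => ((T 1 c : ℕ)) = 0)).card = 2*b := hAgen 0
    have g1 : (univ.filter (fun c => ((T 0 c : ℕ)) = 1)).card +
        (univ.filter (fun c => ((T 1 c : ℕ)) = 1)).card = 2*b := hAgen 1
    have g2 : (univ.filter (fun c => ((T 0 c : ℕ)) = 2)).card +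
        (univ.filter (fun c => ((T 1 c : ℕ)) = 2)).card = 2*b := hAgen 2
    have g3 : (univ.filter (fun c => ((T 0 c : ℕ)) = 3)).card +
        (univ.filter (fun c => ((T 1 c : ℕ)) = 3)).card = 2*b - 1 := hAgen 3
    have g4 : (univ.filter (fun c => ((T 0 c : ℕ)) = 4)).card +
        (univ.filter (fun c => ((T 1 c : ℕ)) = 4)).card = 2*b - 1 := hAgen 4
    have r00 : cnt (T 0) 0 = (univ.filter (fun c => ((T 0 c : ℕ)) = 0)).card := cnt_zero' (T 0)
    have r01 : cnt (T 0) 1 = cnt (T 0) 0 + (univ.filter (fun c => ((T 0 c : ℕ)) = 1)).card :=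
      cnt_succ (T 0) 0
    have r02 : cnt (T 0) 2 = cnt (T 0) 1 + (univ.filter (fun c => ((T 0 c : ℕ)) = 2)).card :=
      cnt_succ (T 0) 1
    have r03 : cnt (T 0) 3 = cnt (T 0) 2 + (univ.filter (fun c => ((T 0 c : ℕ)) = 3)).card :=
      cnt_succ (T 0) 2
    have r04 : cnt (T 0) 4 = cnt (T 0) 3 + (univ.filter (fun c => ((T 0 c : ℕ)) = 4)).card :=
      cnt_succ (T 0) 3
    have r10 : cnt (T 1) 0 = (univ.filter (fun c => ((T 1 c : ℕ)) = 0)).card := cnt_zero' (T 1)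
    have r11 : cnt (T 1) 1 = cnt (T 1) 0 + (univ.filter (fun c => ((T 1 c : ℕ)) = 1)).card :=
      cnt_succ (T 1) 0
    have r12 : cnt (T 1) 2 = cnt (T 1) 1 + (univ.filter (fun c => ((T 1 c : ℕ)) = 2)).card :=
      cnt_succ (T 1) 1
    have r13 : cnt (T 1) 3 = cnt (T 1) 2 + (univ.filter (fun c => ((T 1 c : ℕ)) = 3)).card :=
      cnt_succ (T 1) 2
    have r14 : cnt (T 1) 4 = cnt (T 1) 3 + (univ.filter (fun c => ((T 1 c : ℕ)) = 4)).card :=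
      cnt_succ (T 1) 3
    have t0 : cnt (T 0) 4 = 5*b - 1 := cnt_top (T 0) 4 (by omega)
    have t1 : cnt (T 1) 4 = 5*b - 1 := cnt_top (T 1) 4 (by omega)
    have bl0 : cnt (T 1) 1 ≤ cnt (T 0) 0 := ballot (hm 0) (hm 1) hcol 0
    have bl1 : cnt (T 1) 2 ≤ cnt (T 0) 1 := ballot (hm 0) (hm 1) hcol 1
    have bl2 : cnt (T 1) 3 ≤ cnt (T 0) 2 := ballot (hm 0) (hm 1) hcol 2
    have bl3 : cnt (T 1) 4 ≤ cnt (T 0) 3 := ballot (hm 0) (hm 1) hcol 3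
    have z10 : (univ.filter (fun c => ((T 1 c : ℕ)) = 0)).card = 0 := by
      rw [Finset.card_eq_zero, Finset.filter_eq_empty_iff]
      intro c _
      have := hcol c
      rw [Fin.lt_def] at this
      omega
    set x := (univ.filter (fun c => ((T 1 c : ℕ)) = 1)).card with hx
    set y := (univ.filter (fun c => ((T 1 c : ℕ)) = 2)).card with hy
    have hPxy : P (x, y) := by
      rw [hP]
      refine ⟨by omega, by omega, by omega, by omega⟩
    refine ⟨⟨(x, y), hPxy⟩, ?_⟩
    apply Subtype.ext
    show (![row0 b x y, row1 b x y] : Fin 2 → Fin (5*b-1) → Fin 5) = T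
    have hrow0 : row0 b x y = T 0 := by
      apply mono_ext (row0_mono b x y) (hm 0)
      intro k
      rcases k with _ | _ | _ | _ | k
      · show cnt (row0 b x y) 0 = cnt (T 0) 0
        rw [cnt_row0_0 hb]; omega
      · show cnt (row0 b x y) 1 = cnt (T 0) 1
        rw [cnt_row0_1 hb (by omega)]; omega
      · show cnt (row0 b x y) 2 = cnt (T 0) 2
        rw [cnt_row0_2 hb (by omega) (by omega) (by omega)]; omega
      · show cnt (row0 b x y) 3 = cnt (T 0) 3
        rw [cnt_row0_big 3 (by omega)]; omega
      · show cnt (row0 b x y) (k+4) = cnt (T 0) (k+4)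
        rw [cnt_row0_big _ (by omega), cnt_top (T 0) (k+4) (by omega)]
    have hrow1 : row1 b x y = T 1 := by
      apply mono_ext (row1_mono b x y) (hm 1)
      intro k
      rcases k with _ | _ | _ | _ | k
      · show cnt (row1 b x y) 0 = cnt (T 1) 0
        rw [cnt_row1_0]; omega
      · show cnt (row1 b x y) 1 = cnt (T 1) 1
        rw [cnt_row1_1 hb (by omega)]; omega
      · show cnt (row1 b x y) 2 = cnt (T 1) 2
        rw [cnt_row1_2 hb (by omega)]; omega
      · show cnt (row1 b x y) 3 = cnt (T 1) 3
        rw [cnt_row1_3 hb (by omega)]; omega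
      · show cnt (row1 b x y) (k+4) = cnt (T 1) (k+4)
        rw [cnt_row1_big _ (by omega), cnt_top (T 1) (k+4) (by omega)]
    funext r
    fin_cases r
    · simpa using hrow0
    · simpa using hrow1
  rw [Nat.card_congr (Equiv.ofBijective f ⟨hinj, hsurj⟩).symm]
  -- now count the region
  rw [Nat.card_congr (Equiv.subtypeEquivRight (q := fun q : ℕ × ℕ =>
      q ∈ (range (2*b+1) ×ˢ range (2*b+1)).filter P)
      (fun q => by
        simp only [Finset.mem_filter, Finset.mem_product, Finset.mem_range, hP]
        omega))]
  rw [Nat.card_eq_finsetCard]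
  rw [Finset.card_filter, Finset.sum_product]
  rw [Finset.sum_congr rfl (g := fun x => if x ≤ b then b + x else 4*b - 2*x + 1)
    (fun x hx => by
      rw [Finset.mem_range] at hx
      rw [← Finset.card_filter]
      have hbeta : ((fun x => if x ≤ b then b + x else 4*b - 2*x + 1) x)
          = if x ≤ b then b + x else 4*b - 2*x + 1 := rfl
      by_cases hxb : x ≤ b
      · rw [if_pos hxb,
          show (range (2*b+1)).filter (fun y => P (x, y)) = Finset.Ico (b+1-x) (2*b+1) from by
            ext z
            simp only [Finset.mem_filter, Finset.mem_range, Finset.mem_Ico, hP]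
            omega,
          Nat.card_Ico]
        omega
      · rw [if_neg hxb,
          show (range (2*b+1)).filter (fun y => P (x, y)) = Finset.range (4*b-2*x+1) from by
            ext z
            simp only [Finset.mem_filter, Finset.mem_range, hP]
            omega,
          Finset.card_range])]
  -- evaluate the sum
  have hsplit : ∑ x ∈ range (2*b+1), (if x ≤ b then b + x else 4*b - 2*x + 1) =
      (∑ x ∈ range (b+1), (b + x)) + ∑ k ∈ range b, (2*k+1) := by
    rw [Finset.range_eq_Ico, ← Finset.sum_Ico_consecutive _ (Nat.zero_le (b+1)) (by omega)]
    congr 1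
    · rw [← Finset.range_eq_Ico]
      exact Finset.sum_congr rfl (fun x hx => by
        rw [Finset.mem_range] at hx
        rw [if_pos (by omega)])
    · rw [Finset.sum_Ico_eq_sum_range, show 2*b+1-(b+1) = b from by omega]
      rw [show (∑ k ∈ range b, (if b+1+k ≤ b then b + (b+1+k) else 4*b - 2*(b+1+k) + 1)) =
          ∑ k ∈ range b, (2*(b-1-k)+1) from
        Finset.sum_congr rfl (fun k hk => by
          rw [Finset.mem_range] at hk
          rw [if_neg (by omega)]
          omega)]
      exact (Finset.sum_range_reflect (fun j => 2*j+1) b).trans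
        (by rw [Finset.range_eq_Ico])
  rw [hsplit]
  have hg1 : (∑ x ∈ range (b+1), x) * 2 = (b+1) * b := by
    rw [Finset.sum_range_id_mul_two]
    simp
  have hg2 : (∑ x ∈ range b, x) * 2 = b * (b-1) := Finset.sum_range_id_mul_two b
  have e1 : ∑ x ∈ range (b+1), (b + x) = (b+1) * b + ∑ x ∈ range (b+1), x := by
    rw [Finset.sum_add_distrib, Finset.sum_const, Finset.card_range, smul_eq_mul]
  have e2 : ∑ k ∈ range b, (2*k+1) = 2 * (∑ x ∈ range b, x) + b := by
    rw [Finset.sum_add_distrib, Finset.sum_const, Finset.card_range, smul_eq_mul,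
      ← Finset.mul_sum]
    omega
  rw [e1, e2]
  obtain ⟨m, rfl⟩ : ∃ m, b = m + 1 := ⟨b - 1, by omega⟩
  rw [Nat.add_sub_cancel] at hg2
  have k1 : (m+1+1) * (m+1) = m*m + 3*m + 2 := by ring
  have k2 : (m+1) * m = m*m + m := by ring
  have k3 : 5*(m+1)^2 + 3*(m+1) = 5*(m*m) + 13*m + 8 := by ring
  omega


/-- For `a = 2b` with `b ≥ 1`, the Kostka number
`K(a, a, a, a−1, a−1) = (5b² + 3b)/2`. -/
theorem kostka_aaa_am1_am1 (b : ℕ) (hb : 1 ≤ b) :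
    kostka [2 * b, 2 * b, 2 * b, 2 * b - 1, 2 * b - 1] = (5 * b ^ 2 + 3 * b) / 2 := by
  unfold kostka
  have hsum : ([2 * b, 2 * b, 2 * b, 2 * b - 1, 2 * b - 1] : List ℕ).sum = 10*b - 2 := by
    simp [List.sum_cons]
    omega
  rw [hsum]
  rw [if_pos (by omega)]
  rw [show (10*b - 2)/2 = 5*b - 1 from by omega]
  exact main_card b hb
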